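/- For all natural numbers k, i, j one has C(k,i)·C(k,j) = ∑_{m = max(i,j)}^{i+j} C(m,i)·C(i, m−j)·C(k,m). -/

import Mathlib

/-- Riordan's product formula for binomial coefficients:
`C(k,i) * C(k,j) = ∑_{m = max(i,j)}^{i+j} C(m,i) * C(i, m-j) * C(k,m)`. -/
theorem riordan_binomial_product (k i j : ℕ) :
    k.choose i * k.choose j =
      ∑ m ∈ Finset.Icc (max i j) (i + j),
        m.choose i * i.choose (m - j) * k.choose m := by
  by_cases hik : i ≤ k
  · -- rewrite each summand via trinomial revision
    have step1 : ∑ m ∈ Finset.Icc (max i j) (i + j),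
        m.choose i * i.choose (m - j) * k.choose m
        = ∑ m ∈ Finset.Icc (max i j) (i + j),
          k.choose i * (i.choose (m - j) * (k - i).choose (m - i)) := by
      refine Finset.sum_congr rfl fun m hm => ?_
      obtain ⟨hm1, hm2⟩ := Finset.mem_Icc.mp hm
      have him : i ≤ m := le_trans (le_max_left _ _) hm1
      by_cases hmk : m ≤ k
      · have h : k.choose m * m.choose i = k.choose i * (k - i).choose (m - i) := Nat.choose_mul him
        rw [show m.choose i * i.choose (m - j) * k.choose m
            = i.choose (m - j) * (k.choose m * m.choose i) by ring, h]
        ring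
      · have h1 : k.choose m = 0 := Nat.choose_eq_zero_of_lt (by omega)
        have h2 : (k - i).choose (m - i) = 0 := Nat.choose_eq_zero_of_lt (by omega)
        rw [h1, h2]; ring
    rw [step1, ← Finset.mul_sum]
    congr 1
    -- now show k.choose j = ∑ ...
    have hv : k.choose j
        = ∑ a ∈ Finset.range (j + 1), i.choose a * (k - i).choose (j - a) := by
      conv_lhs => rw [show k = i + (k - i) by omega]
      rw [Nat.add_choose_eq, Finset.Nat.sum_antidiagonal_eq_sum_range_succ_mk]
    rw [hv]
    -- restrict range to min i j + 1
    have hsub : ∑ a ∈ Finset.range (j + 1), i.choose a * (k - i).choose (j - a)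
        = ∑ a ∈ Finset.range (min i j + 1), i.choose a * (k - i).choose (j - a) := by
      refine (Finset.sum_subset ?_ ?_).symm
      · intro a ha
        simp only [Finset.mem_range] at ha ⊢
        omega
      · intro a ha ha'
        simp only [Finset.mem_range] at ha ha'
        have : i < a := by omega
        rw [Nat.choose_eq_zero_of_lt this, Nat.zero_mul]
    rw [hsub]
    -- reindex: a ↦ i + j - a
    refine Finset.sum_nbij' (fun a => i + j - a) (fun m => i + j - m) ?_ ?_ ?_ ?_ ?_
    · intro a ha
      simp only [Finset.mem_range] at ha
      simp only [Finset.mem_Icc]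
      omega
    · intro m hm
      simp only [Finset.mem_Icc] at hm
      simp only [Finset.mem_range]
      omega
    · intro a ha
      simp only [Finset.mem_range] at ha
      omega
    · intro m hm
      simp only [Finset.mem_Icc] at hm
      omega
    · intro a ha
      simp only [Finset.mem_range] at ha
      have hai : a ≤ i := by omega
      have e1 : i + j - a - j = i - a := by omega
      have e2 : i + j - a - i = j - a := by omega
      rw [e1, e2, Nat.choose_symm hai]
  · -- i > k : both sides are zero
    rw [Nat.choose_eq_zero_of_lt (by omega), Nat.zero_mul]
    refine (Finset.sum_eq_zero fun m hm => ?_).symm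
    obtain ⟨hm1, _⟩ := Finset.mem_Icc.mp hm
    have : k < m := by
      have := le_trans (le_max_left i j) hm1; omega
    rw [Nat.choose_eq_zero_of_lt this, Nat.mul_zero]
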